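/- Let θ > 0, let D be a finite nonempty index set, and for each n ∈ D let λ_n > 0 and x_n > 0. Let (Z_n)_{n∈D} be independent real-valued random variables where each Z_n has the Fréchet cumulative distribution function P(Z_n ≤ z) = exp(−λ_n z^{−θ}) for z > 0. Then for any s ∈ D, the probability that x_s / Z_s < x_n / Z_n for all n ≠ s equals λ_s x_s^{−θ} / (Σ_{n∈D} λ_n x_n^{−θ}). -/

import Mathlib

open MeasureTheory ProbabilityTheory Real Set Filter Topology


section FrechetAux

variable {ν : Measure ℝ} [IsProbabilityMeasure ν] {l θ : ℝ}

lemma frechet_tendsto_zero (hl : 0 < l) (hθ : 0 < θ) :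
    Tendsto (fun n : ℕ => ENNReal.ofReal (Real.exp (-l * (((n : ℝ) + 1)⁻¹) ^ (-θ))))
      atTop (𝓝 0) := by
  have h1 : Tendsto (fun n : ℕ => ((n : ℝ) + 1)) atTop atTop :=
    tendsto_atTop_add_const_right _ 1 tendsto_natCast_atTop_atTop
  have h2 : Tendsto (fun n : ℕ => ((n : ℝ) + 1) ^ θ) atTop atTop :=
    (tendsto_rpow_atTop hθ).comp h1
  have h3 : Tendsto (fun n : ℕ => -l * (((n : ℝ) + 1)⁻¹) ^ (-θ)) atTop atBot := by
    have heq : ∀ n : ℕ, -l * (((n : ℝ) + 1)⁻¹) ^ (-θ) = -(l * ((n : ℝ) + 1) ^ θ) := by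
      intro n
      rw [Real.inv_rpow (by positivity), ← Real.rpow_neg (by positivity), neg_neg]
      ring
    simp only [heq]
    exact tendsto_neg_atTop_atBot.comp (h2.const_mul_atTop hl)
  have h4 : Tendsto (fun n : ℕ => Real.exp (-l * (((n : ℝ) + 1)⁻¹) ^ (-θ))) atTop (𝓝 0) :=
    Real.tendsto_exp_atBot.comp h3
  have := (ENNReal.continuous_ofReal.tendsto 0).comp h4
  simpa [Function.comp_def] using this

lemma frechet_Iic_nonpos (hl : 0 < l) (hθ : 0 < θ)
    (hcdf : ∀ z > (0 : ℝ), ν (Iic z) = ENNReal.ofReal (Real.exp (-l * z ^ (-θ)))) :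
    ν (Iic (0 : ℝ)) = 0 := by
  have hset : Iic (0 : ℝ) = ⋂ n : ℕ, Iic (((n : ℝ) + 1)⁻¹) := by
    ext u
    simp only [mem_Iic, mem_iInter]
    constructor
    · intro h n; exact h.trans (by positivity)
    · intro h
      by_contra hu
      push_neg at hu
      obtain ⟨n, hn⟩ := exists_nat_one_div_lt hu
      exact absurd (h n) (by rw [one_div] at hn; exact not_le.2 hn)
  have hanti : Antitone fun n : ℕ => Iic (((n : ℝ) + 1)⁻¹) := by
    intro m n hmn
    apply Iic_subset_Iic.2
    apply inv_anti₀ (by positivity)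
    exact add_le_add_left (Nat.cast_le.2 hmn) 1
  have htend := tendsto_measure_iInter_atTop (μ := ν)
    (fun n => measurableSet_Iic.nullMeasurableSet) hanti ⟨0, measure_ne_top _ _⟩
  rw [← hset] at htend
  have htend2 : Tendsto (fun n : ℕ => ν (Iic (((n : ℝ) + 1)⁻¹))) atTop (𝓝 0) := by
    have : ∀ n : ℕ, ν (Iic (((n : ℝ) + 1)⁻¹)) =
        ENNReal.ofReal (Real.exp (-l * (((n : ℝ) + 1)⁻¹) ^ (-θ))) := fun n =>
      hcdf _ (by positivity)
    simp only [this]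
    exact frechet_tendsto_zero hl hθ
  exact tendsto_nhds_unique htend htend2

lemma frechet_Iio (hl : 0 < l) (hθ : 0 < θ)
    (hcdf : ∀ z > (0 : ℝ), ν (Iic z) = ENNReal.ofReal (Real.exp (-l * z ^ (-θ))))
    {c : ℝ} (hc : 0 < c) :
    ν (Iio c) = ENNReal.ofReal (Real.exp (-l * c ^ (-θ))) := by
  have hset : Iio c = ⋃ n : ℕ, Iic (c - ((n : ℝ) + 1)⁻¹) := by
    ext u
    simp only [mem_Iio, mem_iUnion, mem_Iic]
    constructor
    · intro h
      obtain ⟨n, hn⟩ := exists_nat_one_div_lt (sub_pos.2 h)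
      exact ⟨n, by rw [one_div] at hn; linarith⟩
    · rintro ⟨n, hn⟩
      have : (0:ℝ) < ((n : ℝ) + 1)⁻¹ := by positivity
      linarith
  have hmono : Monotone fun n : ℕ => Iic (c - ((n : ℝ) + 1)⁻¹) := by
    intro m n hmn
    apply Iic_subset_Iic.2
    have : ((n : ℝ) + 1)⁻¹ ≤ ((m : ℝ) + 1)⁻¹ :=
      inv_anti₀ (by positivity) (add_le_add_left (Nat.cast_le.2 hmn) 1)
    linarith
  have htend := tendsto_measure_iUnion_atTop (μ := ν) hmono
  rw [← hset] at htend
  have htend2 : Tendsto (fun n : ℕ => ν (Iic (c - ((n : ℝ) + 1)⁻¹))) atTop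
      (𝓝 (ENNReal.ofReal (Real.exp (-l * c ^ (-θ))))) := by
    have hcont : ContinuousAt (fun t : ℝ => ENNReal.ofReal (Real.exp (-l * t ^ (-θ)))) c := by
      apply ENNReal.continuous_ofReal.continuousAt.comp
      apply Real.continuous_exp.continuousAt.comp
      exact (continuousAt_const.mul ((Real.continuousAt_rpow_const c (-θ)
        (Or.inl hc.ne')) ))
    have harg : Tendsto (fun n : ℕ => c - ((n : ℝ) + 1)⁻¹) atTop (𝓝 c) := by
      have h1 : Tendsto (fun n : ℕ => ((n : ℝ) + 1)) atTop atTop :=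
        tendsto_atTop_add_const_right _ 1 tendsto_natCast_atTop_atTop
      have := h1.inv_tendsto_atTop
      simpa using tendsto_const_nhds.sub this
    have hcomp := hcont.tendsto.comp harg
    apply hcomp.congr'
    have hev : ∀ᶠ n : ℕ in atTop, 0 < c - ((n : ℝ) + 1)⁻¹ := by
      have : Tendsto (fun n : ℕ => c - ((n : ℝ) + 1)⁻¹) atTop (𝓝 c) := harg
      exact this.eventually (eventually_gt_nhds hc) |>.mono fun n h => h
    filter_upwards [hev] with n hn
    exact (hcdf _ hn).symm
  exact tendsto_nhds_unique htend htend2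

end FrechetAux
open MeasureTheory ProbabilityTheory Real Set Filter Topology

section FrechetAux2

variable {ν : Measure ℝ} [IsProbabilityMeasure ν] {l θ : ℝ}

lemma frechet_q_measurable (l θ : ℝ) :
    Measurable fun u : ℝ => ((-Real.log u) / l) ^ (-θ)⁻¹ := by
  measurability

lemma frechet_q_le_iff (hl : 0 < l) (hθ : 0 < θ) {u z : ℝ} (hu : u ∈ Ioo (0:ℝ) 1)
    (hz : 0 < z) :
    ((-Real.log u) / l) ^ (-θ)⁻¹ ≤ z ↔ u ≤ Real.exp (-l * z ^ (-θ)) := by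
  have hlog : Real.log u < 0 := Real.log_neg hu.1 hu.2
  have ht : 0 < (-Real.log u) / l := div_pos (by linarith) hl
  rw [Real.rpow_inv_le_iff_of_neg ht hz (by linarith : -θ < 0)]
  rw [le_div_iff₀ hl, ← Real.log_le_iff_le_exp hu.1]
  constructor <;> intro h <;> nlinarith

lemma frechet_map_eq (hl : 0 < l) (hθ : 0 < θ)
    (hIic0 : ν (Iic (0 : ℝ)) = 0)
    (hcdf : ∀ z > (0 : ℝ), ν (Iic z) = ENNReal.ofReal (Real.exp (-l * z ^ (-θ)))) :
    ν = Measure.map (fun u : ℝ => ((-Real.log u) / l) ^ (-θ)⁻¹)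
        (volume.restrict (Ioo (0 : ℝ) 1)) := by
  have hq := frechet_q_measurable l θ
  refine Measure.ext_of_Iic ν _ fun z => ?_
  rw [Measure.map_apply hq measurableSet_Iic,
    Measure.restrict_apply (hq measurableSet_Iic)]
  have hqpos : ∀ u ∈ Ioo (0:ℝ) 1, 0 < ((-Real.log u) / l) ^ (-θ)⁻¹ := by
    intro u hu
    have hlog : Real.log u < 0 := Real.log_neg hu.1 hu.2
    have h2 : 0 < (-Real.log u) / l := div_pos (by linarith) hl
    positivity
  rcases le_or_gt z 0 with hz | hz
  · have h1 : (fun u : ℝ => ((-Real.log u) / l) ^ (-θ)⁻¹) ⁻¹' Iic z ∩ Ioo 0 1 = ∅ := by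
      ext u
      simp only [mem_inter_iff, mem_preimage, mem_Iic, mem_empty_iff_false, iff_false, not_and]
      intro h hu
      exact absurd (h.trans hz) (not_le.2 (hqpos u hu))
    rw [h1]
    simp only [measure_empty]
    exact measure_mono_null (Iic_subset_Iic.2 hz) hIic0
  · have hF0 : (0:ℝ) < Real.exp (-l * z ^ (-θ)) := Real.exp_pos _
    have hF1 : Real.exp (-l * z ^ (-θ)) < 1 := by
      apply Real.exp_lt_one_iff.2
      have : 0 < z ^ (-θ) := Real.rpow_pos_of_pos hz _
      nlinarith
    have h1 : (fun u : ℝ => ((-Real.log u) / l) ^ (-θ)⁻¹) ⁻¹' Iic z ∩ Ioo 0 1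
        = Ioc 0 (Real.exp (-l * z ^ (-θ))) := by
      ext u
      simp only [mem_inter_iff, mem_preimage, mem_Iic, mem_Ioo, mem_Ioc]
      constructor
      · rintro ⟨h, hu⟩
        exact ⟨hu.1, (frechet_q_le_iff hl hθ hu hz).1 h⟩
      · rintro ⟨hu0, hu⟩
        have hu' : u ∈ Ioo (0:ℝ) 1 := ⟨hu0, lt_of_le_of_lt hu hF1⟩
        exact ⟨(frechet_q_le_iff hl hθ hu' hz).2 hu, hu'⟩
    rw [h1, Real.volume_Ioc, hcdf z hz, sub_zero]

lemma frechet_lintegral (hl : 0 < l) (hθ : 0 < θ)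
    (hIic0 : ν (Iic (0 : ℝ)) = 0)
    (hcdf : ∀ z > (0 : ℝ), ν (Iic z) = ENNReal.ofReal (Real.exp (-l * z ^ (-θ))))
    {a : ℝ} (ha : 0 ≤ a) :
    ∫⁻ z, ENNReal.ofReal (Real.exp (-a * z ^ (-θ))) ∂ν = ENNReal.ofReal (l / (l + a)) := by
  have hq := frechet_q_measurable l θ
  have hg : Measurable fun z : ℝ => ENNReal.ofReal (Real.exp (-a * z ^ (-θ))) :=
    by fun_prop
  rw [frechet_map_eq hl hθ hIic0 hcdf, lintegral_map hg hq]
  have hcongr : ∀ u ∈ Ioo (0:ℝ) 1,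
      ENNReal.ofReal (Real.exp (-a * (((-Real.log u) / l) ^ (-θ)⁻¹) ^ (-θ)))
        = ENNReal.ofReal (u ^ (a / l)) := by
    intro u hu
    have hlog : Real.log u < 0 := Real.log_neg hu.1 hu.2
    have ht : 0 < (-Real.log u) / l := div_pos (by linarith) hl
    have h1 : (((-Real.log u) / l) ^ (-θ)⁻¹) ^ (-θ) = (-Real.log u) / l := by
      rw [← Real.rpow_mul ht.le, inv_mul_cancel₀ (by linarith : (-θ) ≠ 0), Real.rpow_one]
    rw [h1]
    congr 1
    rw [Real.rpow_def_of_pos hu.1]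
    congr 1
    field_simp
  rw [setLIntegral_congr_fun measurableSet_Ioo hcongr]
  have hc : (0:ℝ) ≤ a / l := div_nonneg ha hl.le
  have hint : IntegrableOn (fun u : ℝ => u ^ (a / l)) (Ioo 0 1) volume := by
    have := (intervalIntegral.intervalIntegrable_rpow' (a := 0) (b := 1)
      (by linarith : (-1:ℝ) < a / l))
    rw [intervalIntegrable_iff, uIoc_of_le zero_le_one] at this
    exact this.mono_set Ioo_subset_Ioc_self
  rw [← MeasureTheory.ofReal_integral_eq_lintegral_ofReal hint
    ((ae_restrict_iff' measurableSet_Ioo).2 (ae_of_all _ fun u hu =>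
      Real.rpow_nonneg hu.1.le _))]
  congr 1
  rw [← MeasureTheory.integral_Ioc_eq_integral_Ioo,
    ← intervalIntegral.integral_of_le zero_le_one,
    integral_rpow (Or.inl (by linarith : (-1:ℝ) < a / l))]
  rw [Real.one_rpow, Real.zero_rpow (by positivity : a / l + 1 ≠ 0)]
  field_simp
  ring


/-- **Trade shares as sourcing probabilities.** With independent Fréchet productivity
draws `Z n` (location `λ n`, shape `θ`) and landed input-bundle costs `x n`, the
probability that source `s` offers the strictly lowest delivered cost `x s / Z s`
equals its trade share `λ s * x s ^ (-θ) / ∑ n, λ n * x n ^ (-θ)`. -/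
theorem frechet_trade_share {ι : Type*} [Fintype ι] [Nonempty ι]
    {Ω : Type*} [MeasurableSpace Ω] (μ : Measure Ω) [IsProbabilityMeasure μ]
    (θ : ℝ) (hθ : 0 < θ) (lam x : ι → ℝ)
    (hlam : ∀ n, 0 < lam n) (hx : ∀ n, 0 < x n)
    (Z : ι → Ω → ℝ) (hmeas : ∀ n, Measurable (Z n))
    (hindep : iIndepFun Z μ)
    (hcdf : ∀ n, ∀ z > (0 : ℝ),
      μ {ω | Z n ω ≤ z} = ENNReal.ofReal (Real.exp (-(lam n) * z ^ (-θ))))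
    (s : ι) :
    μ {ω | ∀ n, n ≠ s → x s / Z s ω < x n / Z n ω}
      = ENNReal.ofReal (lam s * x s ^ (-θ) / ∑ n, lam n * x n ^ (-θ)) := by
  classical
  have hprob : ∀ n, IsProbabilityMeasure (μ.map (Z n)) := fun n =>
    Measure.isProbabilityMeasure_map (hmeas n).aemeasurable
  have hcdf' : ∀ n, ∀ z > (0 : ℝ),
      μ.map (Z n) (Iic z) = ENNReal.ofReal (Real.exp (-(lam n) * z ^ (-θ))) := by
    intro n z hz
    rw [Measure.map_apply (hmeas n) measurableSet_Iic]
    exact hcdf n z hz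
  have hIic0 : ∀ n, μ.map (Z n) (Iic 0) = 0 := fun n =>
    haveI := hprob n
    frechet_Iic_nonpos (hlam n) hθ (hcdf' n)
  set A : ℝ := ∑ n ∈ Finset.univ.erase s, lam n * x n ^ (-θ) with hAdef
  have hA : 0 ≤ A :=
    Finset.sum_nonneg fun n _ =>
      mul_nonneg (hlam n).le (Real.rpow_nonneg (hx n).le _)
  have hxsθ : (0:ℝ) < x s ^ θ := Real.rpow_pos_of_pos (hx s) _
  have hxsθ' : (0:ℝ) < x s ^ (-θ) := Real.rpow_pos_of_pos (hx s) _
  -- the vector of other draws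
  let Y : Ω → ({n : ι // n ≠ s} → ℝ) := fun ω n => Z n.1 ω
  have hY : Measurable Y := measurable_pi_lambda _ fun n => hmeas n.1
  haveI : IsProbabilityMeasure (μ.map Y) := Measure.isProbabilityMeasure_map hY.aemeasurable
  haveI : IsProbabilityMeasure (μ.map (Z s)) := hprob s
  -- independence of Z s and Y
  have hXY : IndepFun (Z s) Y μ := by
    have hfin := hindep.indepFun_finset {s} (Finset.univ.erase s)
      (Finset.disjoint_singleton_left.2 (Finset.notMem_erase s _)) hmeas
    have h1 : Measurable fun v : (({s} : Finset ι) → ℝ) =>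
        v ⟨s, Finset.mem_singleton_self s⟩ := measurable_pi_apply _
    have h2 : Measurable fun (v : {m : ι // m ∈ Finset.univ.erase s} → ℝ)
        (n : {n : ι // n ≠ s}) =>
        v ⟨n.1, Finset.mem_erase.2 ⟨n.2, Finset.mem_univ _⟩⟩ :=
      measurable_pi_lambda _ fun n => measurable_pi_apply _
    exact hfin.comp h1 h2
  -- the event as a preimage
  set T : Set (ℝ × ({n : ι // n ≠ s} → ℝ)) :=
    {p | ∀ n : {n : ι // n ≠ s}, x s / p.1 < x n.1 / p.2 n} with hTdef
  have hT : MeasurableSet T := by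
    have hTeq : T = ⋂ n : {n : ι // n ≠ s},
        {p : ℝ × ({n : ι // n ≠ s} → ℝ) | x s / p.1 < x n.1 / p.2 n} := by
      ext p; simp [hTdef, Set.mem_iInter]
    rw [hTeq]
    refine MeasurableSet.iInter fun n => measurableSet_lt ?_ ?_
    · exact measurable_const.div measurable_fst
    · exact measurable_const.div ((measurable_pi_apply n).comp measurable_snd)
  have hevent : {ω | ∀ n, n ≠ s → x s / Z s ω < x n / Z n ω}
      = (fun ω => (Z s ω, Y ω)) ⁻¹' T := by
    ext ω
    simp only [Set.mem_setOf_eq, Set.mem_preimage, hTdef]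
    constructor
    · intro h n; exact h n.1 n.2
    · intro h n hn; exact h ⟨n, hn⟩
  have hpair : Measurable fun ω => (Z s ω, Y ω) := (hmeas s).prodMk hY
  have hmap : μ {ω | ∀ n, n ≠ s → x s / Z s ω < x n / Z n ω}
      = ∫⁻ z, (μ.map Y) (Prod.mk z ⁻¹' T) ∂(μ.map (Z s)) := by
    rw [hevent, ← Measure.map_apply hpair hT,
      (indepFun_iff_map_prod_eq_prod_map_map (hmeas s).aemeasurable hY.aemeasurable).1 hXY,
      Measure.prod_apply hT]
  -- section measure for z > 0
  have hsec : ∀ z > (0:ℝ), (μ.map Y) (Prod.mk z ⁻¹' T)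
      = ENNReal.ofReal (Real.exp (-(x s ^ θ * A) * z ^ (-θ))) := by
    intro z hz
    have hsect : MeasurableSet (Prod.mk z ⁻¹' T) := measurable_prodMk_left hT
    rw [Measure.map_apply hY hsect]
    have hYpre : Y ⁻¹' (Prod.mk z ⁻¹' T)
        = ⋂ n ∈ Finset.univ.erase s, Z n ⁻¹' {w : ℝ | x s / z < x n / w} := by
      ext ω
      simp only [Set.mem_preimage, Set.mem_iInter, Finset.mem_erase, Finset.mem_univ,
        and_true, Set.mem_setOf_eq, hTdef]
      constructor
      · intro h n hn; exact h ⟨n, hn⟩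
      · intro h n; exact h n.1 n.2
    have hBmeas : ∀ n : ι, MeasurableSet {w : ℝ | x s / z < x n / w} :=
      fun n => measurableSet_lt measurable_const (measurable_const.div measurable_id)
    rw [hYpre, hindep.meas_biInter (fun n _ => ⟨{w : ℝ | x s / z < x n / w}, hBmeas n, rfl⟩)]
    have hfac : ∀ n : ι, μ (Z n ⁻¹' {w : ℝ | x s / z < x n / w})
        = ENNReal.ofReal (Real.exp (-(lam n) * (x n * z / x s) ^ (-θ))) := by
      intro n
      have hc : 0 < x n * z / x s := by
        have := hx n; have := hx s; positivity
      have hBset : {w : ℝ | x s / z < x n / w} = Set.Ioo 0 (x n * z / x s) := by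
        ext w
        simp only [Set.mem_setOf_eq, Set.mem_Ioo]
        constructor
        · intro h
          have hxsz : 0 < x s / z := div_pos (hx s) hz
          have hdiv : 0 < x n / w := hxsz.trans h
          have hw : 0 < w := by
            rcases div_pos_iff.1 hdiv with ⟨_, h2⟩ | ⟨h1, _⟩
            · exact h2
            · exact absurd (hx n) (not_lt.2 h1.le)
          refine ⟨hw, ?_⟩
          rw [div_lt_div_iff₀ hz hw] at h
          rw [lt_div_iff₀ (hx s)]
          nlinarith
        · rintro ⟨hw, hwc⟩
          rw [div_lt_div_iff₀ hz hw]
          rw [lt_div_iff₀ (hx s)] at hwc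
          nlinarith
      have hIoo : Set.Ioo (0:ℝ) (x n * z / x s)
          = Set.Iio (x n * z / x s) \ Set.Iic 0 := by
        ext w
        simp only [Set.mem_Ioo, Set.mem_diff, Set.mem_Iio, Set.mem_Iic, not_le]
        tauto
      haveI := hprob n
      rw [hBset, ← Measure.map_apply (hmeas n) measurableSet_Ioo, hIoo,
        measure_diff_null (hIic0 n), frechet_Iio (hlam n) hθ (hcdf' n) hc]
    rw [Finset.prod_congr rfl fun n _ => hfac n]
    rw [← ENNReal.ofReal_prod_of_nonneg fun n _ => (Real.exp_nonneg _)]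
    rw [← Real.exp_sum]
    congr 2
    have hterm : ∀ n : ι, -(lam n) * (x n * z / x s) ^ (-θ)
        = lam n * x n ^ (-θ) * (-(x s ^ θ) * z ^ (-θ)) := by
      intro n
      have h1 : (x n * z / x s) ^ (-θ) = (x n * z) ^ (-θ) / x s ^ (-θ) :=
        Real.div_rpow (mul_nonneg (hx n).le hz.le) (hx s).le (-θ)
      have h2 : (x n * z) ^ (-θ) = x n ^ (-θ) * z ^ (-θ) :=
        Real.mul_rpow (hx n).le hz.le
      have h3 : x s ^ (-θ) = (x s ^ θ)⁻¹ := by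
        rw [Real.rpow_neg (hx s).le]
      rw [h1, h2, h3, div_eq_mul_inv, inv_inv]
      ring
    rw [Finset.sum_congr rfl fun n _ => hterm n, ← Finset.sum_mul, ← hAdef]
    ring
  -- integrate over the law of Z s
  have hae : ∀ᵐ z ∂(μ.map (Z s)), 0 < z := by
    rw [ae_iff]
    have hset : {z : ℝ | ¬ 0 < z} = Set.Iic 0 := by ext z; simp [not_lt]
    rw [hset]
    exact hIic0 s
  have hcongr : (fun z => (μ.map Y) (Prod.mk z ⁻¹' T))
      =ᵐ[μ.map (Z s)] fun z =>
        ENNReal.ofReal (Real.exp (-(x s ^ θ * A) * z ^ (-θ))) := by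
    filter_upwards [hae] with z hz using hsec z hz
  rw [hmap, lintegral_congr_ae hcongr,
    frechet_lintegral (hlam s) hθ (hIic0 s) (hcdf' s) (mul_nonneg hxsθ.le hA)]
  -- final arithmetic
  congr 1
  have hsum : (∑ n, lam n * x n ^ (-θ)) = lam s * x s ^ (-θ) + A :=
    (Finset.add_sum_erase _ _ (Finset.mem_univ s)).symm
  rw [hsum]
  have hxx : x s ^ (-θ) * x s ^ θ = 1 := by
    rw [← Real.rpow_add (hx s)]
    simp
  have hd1 : (0:ℝ) < lam s + x s ^ θ * A :=
    add_pos_of_pos_of_nonneg (hlam s) (mul_nonneg hxsθ.le hA)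
  have hd2 : (0:ℝ) < lam s * x s ^ (-θ) + A :=
    add_pos_of_pos_of_nonneg (mul_pos (hlam s) hxsθ') hA
  rw [div_eq_div_iff hd1.ne' hd2.ne']
  linear_combination (-(lam s * A)) * hxx
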